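/- Let n ≥ 0 and let h : ℝ^{n+1} → ℝ^{n+1} be a coarse map (proper and bornologous). Suppose h does not have the coarse fixed point property; that is, for every R > 0 the set of points x ∈ ℝ^{n+1} for which there exists a unit vector ζ ∈ S^n with both x and h(x) within distance R of the ray {t·ζ : t ≥ 0} is bounded. Define H_t(x) := t·h(x) − (1−t)·x for t ∈ [0,1]. Then the family {H_t} is uniformly proper: for every bounded set B ⊂ ℝ^{n+1}, the set ⋃_{t ∈ [0,1]} H_t^{-1}(B) = {x ∈ ℝ^{n+1} : ∃ t ∈ [0,1], t·h(x) − (1−t)·x ∈ B} is bounded. -/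

import Mathlib

open Metric Bornology Filter

noncomputable section

abbrev Euc (m : ℕ) : Type := EuclideanSpace ℝ (Fin m)

/-- A coarse map between metric spaces: proper and bornologous. -/
def IsCoarseMap {X Y : Type*} [MetricSpace X] [MetricSpace Y] (f : X → Y) : Prop :=
  (∀ B : Set Y, IsBounded B → IsBounded (f ⁻¹' B)) ∧
  (∀ R > 0, ∃ S > 0, ∀ x x' : X, dist x x' ≤ R → dist (f x) (f x') ≤ S)

/-- The ray `{t • ζ : t ≥ 0}` through `ζ`. -/
def Ray {m : ℕ} (ζ : Euc m) : Set (Euc m) := {y | ∃ t : ℝ, 0 ≤ t ∧ y = t • ζ}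

/-- If a coarse map `h : ℝ^{n+1} → ℝ^{n+1}` fails the coarse fixed point property,
then the linear homotopy `H_t(x) = t • h(x) - (1-t) • x` is uniformly proper. -/
theorem linear_homotopy_uniformly_proper (n : ℕ)
    (h : Euc (n+1) → Euc (n+1)) (hcoarse : IsCoarseMap h)
    (hnofix : ∀ R > (0:ℝ), IsBounded {x : Euc (n+1) |
      ∃ ζ : Euc (n+1), ‖ζ‖ = 1 ∧
        infDist x (Ray ζ) ≤ R ∧ infDist (h x) (Ray ζ) ≤ R}) :
    ∀ B : Set (Euc (n+1)), IsBounded B →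
      IsBounded {x : Euc (n+1) | ∃ t ∈ Set.Icc (0:ℝ) 1,
        t • h x - (1 - t) • x ∈ B} := by
  obtain ⟨_hproper, hborn⟩ := hcoarse
  obtain ⟨S, hSpos, hS⟩ := hborn 1 one_pos
  -- linear growth bound from bornologousness, by chaining
  have key : ∀ k : ℕ, ∀ x : Euc (n+1), ‖x‖ ≤ k → dist (h x) (h 0) ≤ S * k := by
    intro k
    induction k with
    | zero =>
      intro x hx
      have hx0 : x = 0 := by
        simpa [norm_le_zero_iff] using hx
      simp [hx0]
    | succ k ih =>
      intro x hx
      set y : Euc (n+1) := ((k : ℝ)/(k+1)) • x with hy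
      have hk1 : (0:ℝ) < (k:ℝ) + 1 := by positivity
      have hyk : ‖y‖ ≤ k := by
        rw [hy, norm_smul, Real.norm_eq_abs, abs_of_nonneg (by positivity)]
        rw [div_mul_eq_mul_div, div_le_iff₀ hk1]
        have hxk : ‖x‖ ≤ (k:ℝ) + 1 := by push_cast at hx ⊢; linarith
        nlinarith [norm_nonneg x, Nat.cast_nonneg (α := ℝ) k]
      have hdxy : dist x y ≤ 1 := by
        have hxy : x - y = (1/((k:ℝ)+1)) • x := by
          have hc : (1:ℝ) - (k:ℝ)/((k:ℝ)+1) = 1/((k:ℝ)+1) := by field_simp; ring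
          rw [hy, ← hc, sub_smul, one_smul]
        rw [dist_eq_norm, hxy, norm_smul, Real.norm_eq_abs, abs_of_nonneg (by positivity)]
        rw [div_mul_eq_mul_div, div_le_iff₀ hk1]
        have hxk : ‖x‖ ≤ (k:ℝ) + 1 := by push_cast at hx ⊢; linarith
        linarith
      push_cast
      calc dist (h x) (h 0) ≤ dist (h x) (h y) + dist (h y) (h 0) := dist_triangle _ _ _
        _ ≤ S + S * k := add_le_add (hS _ _ hdxy) (ih y hyk)
        _ = S * ((k:ℝ)+1) := by ring
  have growth : ∀ x : Euc (n+1), dist (h x) (h 0) ≤ S * (‖x‖ + 1) := by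
    intro x
    have h1 : ‖x‖ ≤ (⌈‖x‖⌉₊ : ℝ) := Nat.le_ceil _
    have h2 : (⌈‖x‖⌉₊ : ℝ) ≤ ‖x‖ + 1 := (Nat.ceil_lt_add_one (norm_nonneg x)).le
    calc dist (h x) (h 0) ≤ S * (⌈‖x‖⌉₊ : ℝ) := key _ x h1
      _ ≤ S * (‖x‖ + 1) := by nlinarith
  intro B hB
  obtain ⟨r0, hr0⟩ := hB.subset_closedBall 0
  set r : ℝ := max r0 1 with hrdef
  have hr1 : (1:ℝ) ≤ r := le_max_right _ _
  have hrpos : (0:ℝ) < r := lt_of_lt_of_le one_pos hr1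
  have hrB : B ⊆ closedBall 0 r :=
    hr0.trans (closedBall_subset_closedBall (le_max_left _ _))
  set C : ℝ := ‖h 0‖ + S with hCdef
  have hCpos : 0 < C := by positivity
  set R : ℝ := 2 * r * (1 + 2 * C) with hRdef
  have hRpos : 0 < R := by positivity
  obtain ⟨ρ, hρ⟩ := (hnofix R hRpos).subset_closedBall 0
  apply (isBounded_closedBall (x := (0 : Euc (n+1))) (r := max ρ (2*r + 2))).subset
  rintro x ⟨t, ⟨ht0, ht1⟩, hxB⟩
  simp only [mem_closedBall, dist_zero_right]
  by_cases hx : ‖x‖ ≤ 2*r + 2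
  · exact hx.trans (le_max_right _ _)
  push_neg at hx
  have hxpos : 0 < ‖x‖ := by linarith
  have hxne : x ≠ 0 := by
    intro h0; rw [h0] at hxpos; simp at hxpos
  -- norm of homotopy image is ≤ r
  have hnormB : ‖t • h x - (1 - t) • x‖ ≤ r := by
    have := hrB hxB
    simpa [mem_closedBall, dist_zero_right] using this
  -- growth bound on ‖h x‖
  have hhx : ‖h x‖ ≤ 2 * C * ‖x‖ := by
    have h1 : ‖h x‖ ≤ dist (h x) (h 0) + ‖h 0‖ := by
      have := dist_triangle (h x) (h 0) 0
      simpa [dist_zero_right] using this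
    have h2 := growth x
    have hx1 : (1:ℝ) ≤ ‖x‖ := by linarith
    rw [hCdef]
    nlinarith [norm_nonneg (h 0), hSpos.le]
  -- lower bound on t
  have htl : ‖x‖ - r ≤ t * (‖x‖ + ‖h x‖) := by
    have h1 : ‖(1 - t) • x‖ - ‖t • h x‖ ≤ ‖(1 - t) • x - t • h x‖ :=
      norm_sub_norm_le _ _
    have h2 : ‖(1 - t) • x - t • h x‖ = ‖t • h x - (1 - t) • x‖ := norm_sub_rev _ _
    rw [h2] at h1
    rw [norm_smul, norm_smul, Real.norm_eq_abs, Real.norm_eq_abs,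
      abs_of_nonneg (by linarith), abs_of_nonneg ht0] at h1
    nlinarith
  have ht : 1 / (2 * (1 + 2 * C)) ≤ t := by
    have h1 : t * (‖x‖ + ‖h x‖) ≤ t * (‖x‖ + 2 * C * ‖x‖) := by
      apply mul_le_mul_of_nonneg_left _ ht0
      linarith
    have h2 : ‖x‖ / 2 ≤ ‖x‖ - r := by linarith
    have h3 : ‖x‖ / 2 ≤ t * ((1 + 2 * C) * ‖x‖) := by nlinarith
    rw [div_le_iff₀ (by positivity)]
    nlinarith
  have htpos : 0 < t := lt_of_lt_of_le (by positivity) ht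
  -- the ray direction
  set ζ : Euc (n+1) := ‖x‖⁻¹ • x with hζdef
  have hζ : ‖ζ‖ = 1 := by
    rw [hζdef, norm_smul, Real.norm_eq_abs, abs_of_nonneg (by positivity),
      inv_mul_cancel₀ (ne_of_gt hxpos)]
  have hxmem : x ∈ Ray ζ := by
    refine ⟨‖x‖, norm_nonneg x, ?_⟩
    rw [hζdef, smul_smul, mul_inv_cancel₀ (ne_of_gt hxpos), one_smul]
  have hxdist : infDist x (Ray ζ) = 0 := infDist_zero_of_mem hxmem
  -- h x is near the ray
  have hpmem : ((1 - t)/t) • x ∈ Ray ζ := by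
    refine ⟨(1 - t)/t * ‖x‖, mul_nonneg (div_nonneg (by linarith) htpos.le) (norm_nonneg x), ?_⟩
    rw [hζdef, smul_smul, mul_assoc, mul_inv_cancel₀ (ne_of_gt hxpos), mul_one]
  have hdist : dist (h x) (((1 - t)/t) • x) ≤ R := by
    have heq : t • (h x - ((1 - t)/t) • x) = t • h x - (1 - t) • x := by
      rw [smul_sub, smul_smul, mul_div_cancel₀ _ (ne_of_gt htpos)]
    have h1 : t * ‖h x - ((1 - t)/t) • x‖ ≤ r := by
      have := hnormB
      rw [← heq, norm_smul, Real.norm_eq_abs, abs_of_nonneg ht0] at this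
      exact this
    rw [dist_eq_norm]
    rw [← mul_le_mul_iff_right₀ htpos]
    calc t * ‖h x - ((1 - t)/t) • x‖ ≤ r := h1
      _ ≤ t * R := by
        have hne : (1:ℝ) + 2 * C ≠ 0 := by positivity
        have e : 1/(2*(1+2*C)) * (2*r*(1+2*C)) = r := by field_simp
        have h2 := mul_le_mul_of_nonneg_right ht (le_of_lt hRpos)
        rw [hRdef] at h2 ⊢
        rw [e] at h2
        exact h2
  have hhxdist : infDist (h x) (Ray ζ) ≤ R :=
    le_trans (infDist_le_dist_of_mem hpmem) hdist
  have hxF : x ∈ {x : Euc (n+1) | ∃ ζ : Euc (n+1), ‖ζ‖ = 1 ∧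
      infDist x (Ray ζ) ≤ R ∧ infDist (h x) (Ray ζ) ≤ R} :=
    ⟨ζ, hζ, by rw [hxdist]; exact hRpos.le, hhxdist⟩
  have := hρ hxF
  simp only [mem_closedBall, dist_zero_right] at this
  exact this.trans (le_max_left _ _)
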